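/- For any n ≥ 4 and any p > 1, λ_{1,p}(P_n) > λ_{1,p}(P_{n+1}), where P_n denotes the path graph on n vertices. -/

import Mathlib

open scoped Classical

noncomputable section

/-- The term `|f x - f y| ^ p` as a function on unordered pairs. -/
noncomputable def edgeTerm {V : Type*} (p : ℝ) (f : V → ℝ) : Sym2 V → ℝ :=
  Sym2.lift ⟨fun x y => |f x - f y| ^ p, fun x y => by dsimp only; rw [abs_sub_comm]⟩

/-- The `p`-Rayleigh quotient of a function on a finite graph. -/
noncomputable def rayleigh {V : Type*} [Fintype V] [DecidableEq V] (G : SimpleGraph V)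
    (p : ℝ) (f : V → ℝ) : ℝ :=
  (∑ e ∈ G.edgeFinset, edgeTerm p f e) / ∑ v, |f v| ^ p

/-- The first `p`-Dirichlet eigenvalue: infimum of the Rayleigh quotient over nonzero
functions vanishing on the boundary (vertices of degree one). -/
noncomputable def lambda1 {V : Type*} [Fintype V] [DecidableEq V] (G : SimpleGraph V)
    (p : ℝ) : ℝ :=
  sInf {r | ∃ f : V → ℝ, f ≠ 0 ∧ (∀ v, G.degree v = 1 → f v = 0) ∧ r = rayleigh G p f}

/-- The tadpole graph `T_{n,i}` on vertices `0,…,n-1` (vertex `t_k` is `k-1`):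
edges `t_k t_{k+1}` for `1 ≤ k ≤ n-1` together with the edge `t_1 t_i`. -/
def tadpole (n i : ℕ) : SimpleGraph (Fin n) :=
  SimpleGraph.fromRel (fun a b => a.val + 1 = b.val ∨ (a.val = 0 ∧ b.val = i - 1))

/-- The path graph on `n` vertices `0,…,n-1`. -/
def pathG (n : ℕ) : SimpleGraph (Fin n) :=
  SimpleGraph.fromRel (fun a b : Fin n => a.val + 1 = b.val)

/-- The set of edges of `G` with exactly one endpoint in `U`. -/
noncomputable def crossEdges {V : Type*} [Fintype V] [DecidableEq V] (G : SimpleGraph V)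
    (U : Finset V) : Finset (Sym2 V) :=
  G.edgeFinset.filter fun e =>
    Sym2.lift ⟨fun x y => (x ∈ U ∧ y ∉ U) ∨ (x ∉ U ∧ y ∈ U),
      fun x y => by simp only [eq_iff_iff]; tauto⟩ e

/-- The Dirichlet Cheeger constant: infimum of `|E(U,Uᶜ)|/|U|` over nonempty sets `U`
of interior vertices (vertices of degree at least two). -/
noncomputable def dCheeger {V : Type*} [Fintype V] [DecidableEq V] (G : SimpleGraph V) : ℝ :=
  sInf {r | ∃ U : Finset V, U.Nonempty ∧ (∀ v ∈ U, 2 ≤ G.degree v) ∧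
    r = ((crossEdges G U).card : ℝ) / U.card}


open Finset

section aux

lemma edgeTerm_mk {V : Type*} (p : ℝ) (f : V → ℝ) (x y : V) :
    edgeTerm p f s(x, y) = |f x - f y| ^ p := rfl

lemma pathG_adj {N : ℕ} (a b : Fin N) :
    (pathG N).Adj a b ↔ a ≠ b ∧ (a.val + 1 = b.val ∨ b.val + 1 = a.val) := by
  simp [pathG, SimpleGraph.fromRel_adj]

/-- A generic "skip one index" sum identity. -/
lemma sum_skip {n m : ℕ} (hm : m < n) (w t : ℕ → ℝ) (c : ℝ) (hc : w m = c)
    (hlt : ∀ k < m, w k = t k) (hgt : ∀ k, m < k → k < n → w k = t (k - 1)) :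
    ∑ k ∈ Finset.range n, w k = c + ∑ j ∈ Finset.range (n - 1), t j := by
  rw [← Finset.add_sum_erase _ w (Finset.mem_range.2 hm), hc]
  congr 1
  refine Finset.sum_nbij' (fun k : ℕ => if k < m then k else k - 1)
    (fun j : ℕ => if j < m then j else j + 1) ?_ ?_ ?_ ?_ ?_
  · intro a ha
    simp only [Finset.mem_erase, Finset.mem_range] at ha ⊢
    obtain ⟨h1, h2⟩ := ha
    by_cases h : a < m
    · rw [if_pos h]; omega
    · rw [if_neg h]; omega
  · intro a ha
    simp only [Finset.mem_erase, Finset.mem_range] at ha ⊢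
    by_cases h : a < m
    · rw [if_pos h]; omega
    · rw [if_neg h]; omega
  · intro a ha
    simp only [Finset.mem_erase, Finset.mem_range] at ha
    obtain ⟨h1, h2⟩ := ha
    by_cases h : a < m
    · rw [if_pos h, if_pos h]
    · rw [if_neg h, if_neg (by omega : ¬ a - 1 < m)]; omega
  · intro a ha
    simp only [Finset.mem_range] at ha
    by_cases h : a < m
    · rw [if_pos h, if_pos h]
    · rw [if_neg h, if_neg (by omega : ¬ a + 1 < m)]; omega
  · intro a ha
    simp only [Finset.mem_erase, Finset.mem_range] at ha
    obtain ⟨h1, h2⟩ := ha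
    by_cases h : a < m
    · rw [if_pos h]
      exact hlt a h
    · rw [if_neg h]
      exact hgt a (by omega) h2

/-- Degree-one vertices of the path: vertex 0. -/
lemma pathG_deg_zero {N : ℕ} (hN : 2 ≤ N) : (pathG N).degree ⟨0, by omega⟩ = 1 := by
  rw [← SimpleGraph.card_neighborFinset_eq_degree]
  have : (pathG N).neighborFinset ⟨0, by omega⟩ = {⟨1, by omega⟩} := by
    ext u
    simp only [SimpleGraph.mem_neighborFinset, pathG_adj, Finset.mem_singleton]
    constructor
    · rintro ⟨h1, h2 | h2⟩
      · exact Fin.ext (by simpa using h2.symm)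
      · exact absurd h2 (Nat.succ_ne_zero u.val)
    · rintro rfl
      exact ⟨Fin.ne_of_val_ne (by omega : (0:ℕ) ≠ 1), Or.inl rfl⟩
  rw [this, Finset.card_singleton]

lemma pathG_deg_last {N : ℕ} (hN : 2 ≤ N) : (pathG N).degree ⟨N - 1, by omega⟩ = 1 := by
  rw [← SimpleGraph.card_neighborFinset_eq_degree]
  have : (pathG N).neighborFinset ⟨N - 1, by omega⟩ = {⟨N - 2, by omega⟩} := by
    ext u
    simp only [SimpleGraph.mem_neighborFinset, pathG_adj, Finset.mem_singleton,
      Fin.val_mk] at *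
    constructor
    · rintro ⟨h1, h2 | h2⟩
      · omega
      · have hu := u.isLt
        have hne : u.val ≠ N - 1 := fun hh => h1 (Fin.ext (by simp [hh]))
        exact Fin.ext (by simp only [Fin.val_mk]; omega)
    · rintro rfl
      exact ⟨Fin.ne_of_val_ne (by omega : N - 1 ≠ N - 2), Or.inr (by omega : N - 2 + 1 = N - 1)⟩
  rw [this, Finset.card_singleton]

lemma pathG_deg_interior {N : ℕ} (v : Fin N) (h1 : 0 < v.val) (h2 : v.val < N - 1) :
    2 ≤ (pathG N).degree v := by
  rw [← SimpleGraph.card_neighborFinset_eq_degree]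
  have hvN := v.isLt
  refine Finset.one_lt_card.2 ⟨⟨v.val - 1, by omega⟩, ?_, ⟨v.val + 1, by omega⟩, ?_, ?_⟩
  · simp only [SimpleGraph.mem_neighborFinset, pathG_adj]
    exact ⟨Fin.ne_of_val_ne (by omega : v.val ≠ v.val - 1), Or.inr (by omega : v.val - 1 + 1 = v.val)⟩
  · simp only [SimpleGraph.mem_neighborFinset, pathG_adj]
    exact ⟨Fin.ne_of_val_ne (by omega : v.val ≠ v.val + 1), Or.inl trivial⟩
  · exact Fin.ne_of_val_ne (by omega : v.val - 1 ≠ v.val + 1)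

lemma pathG_deg_one {N : ℕ} (v : Fin N) (hv : (pathG N).degree v = 1) :
    v.val = 0 ∨ v.val = N - 1 := by
  by_contra h
  push_neg at h
  have h1 : 0 < v.val := by omega
  have h2 : v.val < N - 1 := by have := v.isLt; omega
  have := pathG_deg_interior v h1 h2
  omega


def FF (N : ℕ) (f : Fin N → ℝ) : ℕ → ℝ := fun k => if h : k < N then f ⟨k, h⟩ else 0

def psucc {N : ℕ} (a : Fin N) : Fin N :=
  ⟨(a.val + 1) % N, Nat.mod_lt _ (Nat.lt_of_le_of_lt (Nat.zero_le _) a.isLt)⟩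

lemma FF_val {N : ℕ} (f : Fin N → ℝ) (a : Fin N) : FF N f a.val = f a := by
  simp [FF, a.isLt]

lemma fin_succ_val {N : ℕ} (a : Fin N) (h : a.val + 1 < N) :
    (psucc a).val = a.val + 1 := Nat.mod_eq_of_lt h

lemma edgeFinset_path (N : ℕ) : (pathG N).edgeFinset =
    (Finset.univ.filter fun a : Fin N => a.val + 1 < N).image (fun a => s(a, psucc a)) := by
  ext e
  refine Sym2.ind (fun x y => ?_) e
  simp only [SimpleGraph.mem_edgeFinset, SimpleGraph.mem_edgeSet, Finset.mem_image,
    Finset.mem_filter, Finset.mem_univ, true_and, pathG_adj]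
  constructor
  · rintro ⟨hne, h | h⟩
    · refine ⟨x, by omega, ?_⟩
      have : psucc x = y := Fin.ext (by rw [fin_succ_val x (by omega)]; exact h)
      rw [this]
    · refine ⟨y, by omega, ?_⟩
      have : psucc y = x := Fin.ext (by rw [fin_succ_val y (by omega)]; exact h)
      rw [this, Sym2.eq_swap]
  · rintro ⟨a, ha, hae⟩
    have hv := fin_succ_val a ha
    rw [Sym2.eq_iff] at hae
    rcases hae with ⟨rfl, rfl⟩ | ⟨rfl, rfl⟩
    · exact ⟨Fin.ne_of_val_ne (by omega), Or.inl hv.symm⟩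
    · exact ⟨Fin.ne_of_val_ne (by omega), Or.inr hv.symm⟩

lemma path_sum_edges (N : ℕ) (g : Sym2 (Fin N) → ℝ) :
    ∑ e ∈ (pathG N).edgeFinset, g e =
      ∑ a ∈ Finset.univ.filter (fun a : Fin N => a.val + 1 < N), g s(a, psucc a) := by
  rw [edgeFinset_path, Finset.sum_image]
  intro a ha b hb hab
  simp only [Finset.mem_coe, Finset.mem_filter] at ha hb
  rw [Sym2.eq_iff] at hab
  rcases hab with ⟨h1, h2⟩ | ⟨h1, h2⟩
  · exact h1
  · have e1 : a.val = b.val + 1 := by rw [h1]; exact fin_succ_val b hb.2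
    have e2 : b.val = a.val + 1 := by rw [← h2]; exact fin_succ_val a ha.2
    omega

lemma num_path (N : ℕ) (p : ℝ) (f : Fin N → ℝ) :
    ∑ e ∈ (pathG N).edgeFinset, edgeTerm p f e =
      ∑ k ∈ Finset.range (N - 1), |FF N f k - FF N f (k + 1)| ^ p := by
  rw [path_sum_edges, Finset.sum_filter]
  have step : ∀ a : Fin N,
      (if a.val + 1 < N then edgeTerm p f s(a, psucc a) else 0) =
        (fun k : ℕ => if k + 1 < N then |FF N f k - FF N f (k + 1)| ^ p else 0) a.val := by
    intro a
    dsimp only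
    by_cases h : a.val + 1 < N
    · rw [if_pos h, if_pos h]
      have hv := fin_succ_val a h
      have : FF N f (a.val + 1) = f (psucc a) := by
        rw [show a.val + 1 = (psucc a).val from hv.symm, FF_val]
      rw [edgeTerm, Sym2.lift_mk]
      dsimp only
      rw [FF_val, this]
    · rw [if_neg h, if_neg h]
  rw [Finset.sum_congr rfl (fun a _ => step a),
    Fin.sum_univ_eq_sum_range (fun k : ℕ => if k + 1 < N then |FF N f k - FF N f (k + 1)| ^ p else 0) N]
  rw [← Finset.sum_filter]
  have : (Finset.range N).filter (fun k => k + 1 < N) = Finset.range (N - 1) := by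
    ext k; simp only [Finset.mem_filter, Finset.mem_range]; omega
  rw [this]

lemma den_path (N : ℕ) (p : ℝ) (f : Fin N → ℝ) :
    ∑ v, |f v| ^ p = ∑ k ∈ Finset.range N, |FF N f k| ^ p := by
  rw [← Fin.sum_univ_eq_sum_range (fun k => |FF N f k| ^ p) N]
  exact Finset.sum_congr rfl fun a _ => by rw [FF_val]

lemma rayleigh_path (N : ℕ) (p : ℝ) (f : Fin N → ℝ) :
    rayleigh (pathG N) p f =
      (∑ k ∈ Finset.range (N - 1), |FF N f k - FF N f (k + 1)| ^ p) /
        (∑ k ∈ Finset.range N, |FF N f k| ^ p) := by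
  rw [rayleigh, num_path, den_path]


section analysis

variable {V : Type*} [Fintype V] [DecidableEq V] (G : SimpleGraph V) {p : ℝ}

lemma edgeTerm_nonneg (f : V → ℝ) (e : Sym2 V) : 0 ≤ edgeTerm p f e := by
  refine Sym2.ind (fun x y => ?_) e
  rw [edgeTerm_mk]
  exact Real.rpow_nonneg (abs_nonneg _) _

lemma num_nonneg (f : V → ℝ) : 0 ≤ ∑ e ∈ G.edgeFinset, edgeTerm p f e :=
  Finset.sum_nonneg fun e _ => edgeTerm_nonneg f e

lemma den_nonneg (f : V → ℝ) : 0 ≤ ∑ v, |f v| ^ p :=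
  Finset.sum_nonneg fun v _ => Real.rpow_nonneg (abs_nonneg _) _

lemma rayleigh_nonneg (f : V → ℝ) : 0 ≤ rayleigh G p f :=
  div_nonneg (num_nonneg G f) (den_nonneg f)

lemma den_pos (hp : p ≠ 0) {f : V → ℝ} (hf : f ≠ 0) : 0 < ∑ v, |f v| ^ p := by
  obtain ⟨v, hv⟩ := Function.ne_iff.1 hf
  refine Finset.sum_pos' (fun w _ => Real.rpow_nonneg (abs_nonneg _) _) ⟨v, Finset.mem_univ v, ?_⟩
  exact Real.rpow_pos_of_pos (abs_pos.2 hv) _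

lemma abs_mul_rpow (hp : p ≠ 0) (c x : ℝ) : |c * x| ^ p = |c| ^ p * |x| ^ p := by
  rw [abs_mul, Real.mul_rpow (abs_nonneg _) (abs_nonneg _)]

lemma edgeTerm_smul (hp : p ≠ 0) (c : ℝ) (f : V → ℝ) (e : Sym2 V) :
    edgeTerm p (c • f) e = |c| ^ p * edgeTerm p f e := by
  refine Sym2.ind (fun x y => ?_) e
  rw [edgeTerm_mk, edgeTerm_mk]
  have : (c • f) x - (c • f) y = c * (f x - f y) := by simp [mul_sub]
  rw [this, abs_mul_rpow hp]

lemma rayleigh_smul (hp : p ≠ 0) {c : ℝ} (hc : c ≠ 0) (f : V → ℝ) :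
    rayleigh G p (c • f) = rayleigh G p f := by
  have hcp : |c| ^ p ≠ 0 := ne_of_gt (Real.rpow_pos_of_pos (abs_pos.2 hc) _)
  rw [rayleigh, rayleigh]
  have h1 : ∑ e ∈ G.edgeFinset, edgeTerm p (c • f) e =
      |c| ^ p * ∑ e ∈ G.edgeFinset, edgeTerm p f e := by
    rw [Finset.mul_sum]; exact Finset.sum_congr rfl fun e _ => edgeTerm_smul hp c f e
  have h2 : ∑ v, |(c • f) v| ^ p = |c| ^ p * ∑ v, |f v| ^ p := by
    rw [Finset.mul_sum]
    exact Finset.sum_congr rfl fun v _ => by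
      have : (c • f) v = c * f v := rfl
      rw [this, abs_mul_rpow hp]
  rw [h1, h2, mul_div_mul_left _ _ hcp]

lemma lambda1_bddBelow :
    BddBelow {r | ∃ f : V → ℝ, f ≠ 0 ∧ (∀ v, G.degree v = 1 → f v = 0) ∧ r = rayleigh G p f} :=
  ⟨0, by rintro r ⟨f, _, _, rfl⟩; exact rayleigh_nonneg G f⟩

lemma lambda1_le {f : V → ℝ} (hf : f ≠ 0) (hbd : ∀ v, G.degree v = 1 → f v = 0) :
    lambda1 G p ≤ rayleigh G p f :=
  csInf_le (lambda1_bddBelow G) ⟨f, hf, hbd, rfl⟩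

lemma cont_abs_rpow (hp0 : 0 < p) : Continuous fun x : ℝ => |x| ^ p := by
  have h : Continuous fun y : ℝ => y ^ p :=
    continuous_iff_continuousAt.2 fun y => Real.continuousAt_rpow_const y p (Or.inr hp0.le)
  exact h.comp continuous_abs

lemma cont_num (hp0 : 0 < p) :
    Continuous fun f : V → ℝ => ∑ e ∈ G.edgeFinset, edgeTerm p f e := by
  refine continuous_finset_sum _ fun e _ => ?_
  refine Sym2.ind (fun x y => ?_) e
  exact (cont_abs_rpow hp0).comp ((continuous_apply x).sub (continuous_apply y))

lemma cont_den (hp0 : 0 < p) : Continuous fun f : V → ℝ => ∑ v, |f v| ^ p :=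
  continuous_finset_sum _ fun v _ => (cont_abs_rpow hp0).comp (continuous_apply v)

/-- Existence of a minimizer for `lambda1`. -/
lemma lambda1_attained (hp : 1 < p) (v₀ : V) (hv₀ : G.degree v₀ ≠ 1) :
    ∃ f : V → ℝ, f ≠ 0 ∧ (∀ v, G.degree v = 1 → f v = 0) ∧
      rayleigh G p f = lambda1 G p := by
  have hp0 : 0 < p := lt_trans one_pos hp
  have pne : p ≠ 0 := ne_of_gt hp0
  set K : Set (V → ℝ) :=
    {f | (∀ v, G.degree v = 1 → f v = 0) ∧ ∑ v, |f v| ^ p = 1} with hK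
  -- members of K are nonzero
  have K_ne_zero : ∀ f ∈ K, f ≠ (0 : V → ℝ) := by
    rintro f ⟨-, hsum⟩ rfl
    simp only [Pi.zero_apply, abs_zero, Real.zero_rpow pne, Finset.sum_const_zero] at hsum
    exact one_ne_zero hsum.symm
  -- K is compact
  have K_closed : IsClosed K := by
    have hA : IsClosed {f : V → ℝ | ∀ v, G.degree v = 1 → f v = 0} := by
      have : {f : V → ℝ | ∀ v, G.degree v = 1 → f v = 0} =
          ⋂ v, {f : V → ℝ | G.degree v = 1 → f v = 0} := by
        ext f; simp [Set.mem_iInter]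
      rw [this]
      refine isClosed_iInter fun v => ?_
      by_cases h : G.degree v = 1
      · have : {f : V → ℝ | G.degree v = 1 → f v = 0} = {f : V → ℝ | f v = 0} := by
          ext f; simp [h]
        rw [this]
        exact isClosed_eq (continuous_apply v) continuous_const
      · have : {f : V → ℝ | G.degree v = 1 → f v = 0} = Set.univ := by
          ext f; simp [h]
        rw [this]; exact isClosed_univ
    have hB : IsClosed {f : V → ℝ | ∑ v, |f v| ^ p = 1} :=
      isClosed_eq (cont_den hp0) continuous_const
    exact hA.inter hB
  have K_bdd : Bornology.IsBounded K := by
    refine (Metric.isBounded_closedBall (x := (0 : V → ℝ)) (r := 1)).subset ?_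
    rintro f ⟨-, hsum⟩
    rw [Metric.mem_closedBall]
    rw [show dist f (0 : V → ℝ) = dist f 0 from rfl]
    rw [dist_pi_le_iff zero_le_one]
    intro v
    rw [Real.dist_eq, Pi.zero_apply, sub_zero]
    by_contra habs
    push_neg at habs
    have h1 : 1 < |f v| ^ p :=
      (Real.one_lt_rpow_iff_of_pos (lt_trans one_pos habs)).2 (Or.inl ⟨habs, hp0⟩)
    have h2 : |f v| ^ p ≤ 1 := by
      rw [← hsum]
      exact Finset.single_le_sum (fun w _ => Real.rpow_nonneg (abs_nonneg _) _)
        (Finset.mem_univ v)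
    linarith
  have K_cpt : IsCompact K := Metric.isCompact_of_isClosed_isBounded K_closed K_bdd
  -- K is nonempty
  have K_nonempty : K.Nonempty := by
    refine ⟨fun v => if v = v₀ then 1 else 0, fun v hv => ?_, ?_⟩
    · dsimp only
      rw [if_neg]; rintro rfl; exact hv₀ hv
    · rw [Finset.sum_eq_single v₀]
      · simp [Real.rpow_natCast]
      · intro b _ hb
        simp [hb, Real.zero_rpow pne]
      · intro h; exact absurd (Finset.mem_univ v₀) h
  -- rayleigh is continuous on K
  have R_cont : ContinuousOn (rayleigh G p) K := by
    refine ContinuousOn.div (cont_num G hp0).continuousOn (cont_den hp0).continuousOn ?_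
    rintro f ⟨-, hsum⟩
    rw [hsum]; exact one_ne_zero
  obtain ⟨f₀, hf₀K, hmin⟩ := K_cpt.exists_isMinOn K_nonempty R_cont
  refine ⟨f₀, K_ne_zero f₀ hf₀K, hf₀K.1, ?_⟩
  -- rayleigh f₀ equals the infimum
  refine le_antisymm ?_ (lambda1_le G (K_ne_zero f₀ hf₀K) hf₀K.1)
  refine le_csInf ⟨rayleigh G p f₀, f₀, K_ne_zero f₀ hf₀K, hf₀K.1, rfl⟩ ?_
  rintro r ⟨g, hg0, hgbd, rfl⟩
  -- normalize g into K
  set D : ℝ := ∑ v, |g v| ^ p with hD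
  have hDpos : 0 < D := den_pos pne hg0
  set c : ℝ := D ^ (-p⁻¹) with hc
  have hcpos : 0 < c := Real.rpow_pos_of_pos hDpos _
  have hcp : c ^ p = D⁻¹ := by
    rw [hc, ← Real.rpow_mul hDpos.le, neg_mul, inv_mul_cancel₀ pne, Real.rpow_neg_one]
  have hgK : c • g ∈ K := by
    constructor
    · intro v hv
      have : (c • g) v = c * g v := rfl
      rw [this, hgbd v hv, mul_zero]
    · have : ∀ v, |(c • g) v| ^ p = |c| ^ p * |g v| ^ p := fun v => by
        have : (c • g) v = c * g v := rfl
        rw [this, abs_mul_rpow pne]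
      rw [Finset.sum_congr rfl fun v _ => this v, ← Finset.mul_sum, ← hD,
        abs_of_pos hcpos, hcp, inv_mul_cancel₀ hDpos.ne']
  calc rayleigh G p f₀ ≤ rayleigh G p (c • g) := hmin hgK
    _ = rayleigh G p g := rayleigh_smul G pne hcpos.ne' g

end analysis

end aux

/-- The first `p`-Dirichlet eigenvalue of the path graph is strictly decreasing in
the number of vertices. -/
theorem path_gt_longer_path (n : ℕ) (hn : 4 ≤ n) {p : ℝ} (hp : 1 < p) :
    lambda1 (pathG n) p > lambda1 (pathG (n + 1)) p := by
  have hp0 : 0 < p := lt_trans one_pos hp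
  have pne : p ≠ 0 := ne_of_gt hp0
  -- vertex 1 of pathG n is interior
  have hv₀ : (pathG n).degree ⟨1, by omega⟩ ≠ 1 := by
    have h2 := pathG_deg_interior (N := n) ⟨1, by omega⟩ (show (0:ℕ) < 1 by omega) (show (1:ℕ) < n - 1 by omega)
    omega
  obtain ⟨f, hf0, hfbd, hfR⟩ := lambda1_attained (pathG n) hp ⟨1, by omega⟩ hv₀
  obtain ⟨m, hm⟩ := Function.ne_iff.1 hf0
  have hmlt := m.isLt
  set F : ℕ → ℝ := FF n f with hF
  have hFm : F m.val = f m := FF_val f m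
  have hf0v : F 0 = 0 := by
    rw [hF, FF, dif_pos (show (0:ℕ) < n by omega)]
    exact hfbd ⟨0, by omega⟩ (pathG_deg_zero (by omega))
  have hflast : F (n - 1) = 0 := by
    rw [hF, FF, dif_pos (show n - 1 < n by omega)]
    exact hfbd ⟨n - 1, by omega⟩ (pathG_deg_last (by omega))
  have hFbig : ∀ k, n ≤ k → F k = 0 := by
    intro k hk
    rw [hF, FF, dif_neg (by omega)]
  -- the duplicated function on n+1 vertices
  set g : Fin (n + 1) → ℝ :=
    fun k => F (if k.val ≤ m.val then k.val else k.val - 1) with hg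
  have hH : ∀ k : ℕ, FF (n + 1) g k = if k ≤ m.val then F k else F (k - 1) := by
    intro k
    by_cases hk : k < n + 1
    · rw [FF, dif_pos hk]
      have hgk : g ⟨k, hk⟩ = F (if k ≤ m.val then k else k - 1) := rfl
      rw [hgk]
      by_cases hkm : k ≤ m.val
      · rw [if_pos hkm, if_pos hkm]
      · rw [if_neg hkm, if_neg hkm]
    · rw [FF, dif_neg hk, if_neg (by omega), hFbig (k - 1) (by omega)]
  have hg0 : g ≠ 0 := by
    intro hcon
    apply hm
    have h1 : g ⟨m.val, by omega⟩ = 0 := by rw [hcon]; rfl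
    rw [hg] at h1
    simp only [if_pos (le_refl m.val)] at h1
    rw [← hFm]; exact h1
  have hgbd : ∀ v : Fin (n + 1), (pathG (n + 1)).degree v = 1 → g v = 0 := by
    intro v hv
    rcases pathG_deg_one v hv with h0 | hl
    · rw [hg]
      dsimp only
      rw [h0, if_pos (Nat.zero_le _)]
      exact hf0v
    · rw [hg]
      dsimp only
      rw [hl]
      have : ¬ (n + 1 - 1 ≤ m.val) := by omega
      rw [if_neg this]
      have : n + 1 - 1 - 1 = n - 1 := by omega
      rw [this]
      exact hflast
  have le1 : lambda1 (pathG (n + 1)) p ≤ rayleigh (pathG (n + 1)) p g :=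
    lambda1_le _ hg0 hgbd
  set NumF : ℝ := ∑ k ∈ Finset.range (n - 1), |F k - F (k + 1)| ^ p with hNumF
  set DenF : ℝ := ∑ k ∈ Finset.range n, |F k| ^ p with hDenF
  have hRf : rayleigh (pathG n) p f = NumF / DenF := rayleigh_path n p f
  have hRg : rayleigh (pathG (n + 1)) p g = NumF / (DenF + |f m| ^ p) := by
    rw [rayleigh_path]
    have hnum : ∑ k ∈ Finset.range (n + 1 - 1), |FF (n+1) g k - FF (n+1) g (k + 1)| ^ p
        = NumF := by
      rw [show n + 1 - 1 = n from rfl]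
      have := sum_skip (n := n) (m := m.val) hmlt
        (fun k => |FF (n+1) g k - FF (n+1) g (k + 1)| ^ p)
        (fun k => |F k - F (k + 1)| ^ p) 0 ?_ ?_ ?_
      · rw [this, zero_add, hNumF]
      ·
        rw [hH, hH, if_pos (le_refl m.val), if_neg (by omega : ¬ m.val + 1 ≤ m.val)]
        rw [show m.val + 1 - 1 = m.val from rfl, sub_self, abs_zero, Real.zero_rpow pne]
      · intro k hk
        rw [hH, hH, if_pos (by omega : k ≤ m.val), if_pos (by omega : k + 1 ≤ m.val)]
      · intro k hk1 hk2
        rw [hH, hH, if_neg (by omega : ¬ k ≤ m.val), if_neg (by omega : ¬ k + 1 ≤ m.val)]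
        rw [show k + 1 - 1 = k - 1 + 1 by omega]
    have hden : ∑ k ∈ Finset.range (n + 1), |FF (n+1) g k| ^ p = DenF + |f m| ^ p := by
      have := sum_skip (n := n + 1) (m := m.val + 1) (by omega)
        (fun k => |FF (n+1) g k| ^ p) (fun k => |F k| ^ p) (|f m| ^ p) ?_ ?_ ?_
      · rw [this, show n + 1 - 1 = n from rfl, ← hDenF, add_comm]
      ·
        rw [hH, if_neg (by omega : ¬ m.val + 1 ≤ m.val),
          show m.val + 1 - 1 = m.val from rfl, hFm]
      · intro k hk
        rw [hH, if_pos (by omega : k ≤ m.val)]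
      · intro k hk1 hk2
        rw [hH, if_neg (by omega : ¬ k ≤ m.val)]
    rw [hnum, hden]
  have hDen : 0 < DenF := by
    have : DenF = ∑ v, |f v| ^ p := (den_path n p f).symm
    rw [this]
    exact den_pos pne hf0
  have hfm : 0 < |f m| ^ p := Real.rpow_pos_of_pos (abs_pos.2 hm) p
  have hNum : 0 < NumF := by
    have hge : 0 ≤ NumF :=
      Finset.sum_nonneg fun k _ => Real.rpow_nonneg (abs_nonneg _) _
    rcases hge.lt_or_eq with hlt | heq
    · exact hlt
    exfalso
    have hzero : ∀ k ∈ Finset.range (n - 1), |F k - F (k + 1)| ^ p = 0 :=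
      (Finset.sum_eq_zero_iff_of_nonneg
        (fun k _ => Real.rpow_nonneg (abs_nonneg _) _)).1 heq.symm
    have hstep : ∀ k, k < n - 1 → F (k + 1) = F k := by
      intro k hk
      have h1 := hzero k (Finset.mem_range.2 hk)
      rw [Real.rpow_eq_zero (abs_nonneg _) pne] at h1
      have := abs_eq_zero.1 h1
      linarith
    have hall : ∀ k, k ≤ n - 1 → F k = 0 := by
      intro k
      induction k with
      | zero => intro _; exact hf0v
      | succ k ih =>
        intro hk
        rw [hstep k (by omega)]
        exact ih (by omega)
    exact hm (hFm.symm.trans (hall m.val (by omega)))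
  have lt1 : NumF / (DenF + |f m| ^ p) < NumF / DenF :=
    div_lt_div_of_pos_left hNum hDen (lt_add_of_pos_right DenF hfm)
  calc lambda1 (pathG (n + 1)) p ≤ NumF / (DenF + |f m| ^ p) := hRg ▸ le1
    _ < NumF / DenF := lt1
    _ = lambda1 (pathG n) p := hRf ▸ hfR

end
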